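/- For the unit-weighted complete graph on N ≥ 3 vertices, the minimal eigenvalue of K(α) = L - αΔ is m(α) = -αN - (-N(α+1) + √((N(α+1)-2)² + 4(N-1)))/2 for all α ∈ ℝ. -/

import Mathlib

open Matrix BigOperators

lemma sum_if_fin (N : ℕ) (hN : 0 < N) (a b : ℝ) :
    ∑ j : Fin N, (if (j:ℕ) = 0 then a else b) = a + ((N:ℝ)-1)*b := by
  have h : ∀ j : Fin N, (if (j:ℕ) = 0 then a else b)
      = b + (if j = (⟨0, hN⟩ : Fin N) then a - b else 0) := by
    intro j
    by_cases h : (j:ℕ) = 0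
    · simp [h, Fin.ext_iff]
    · simp [h, Fin.ext_iff]
  rw [Finset.sum_congr rfl (fun j _ => h j), Finset.sum_add_distrib,
    Finset.sum_const, Finset.sum_ite_eq' Finset.univ]
  simp
  ring

lemma mulVec_key (N : ℕ) (α : ℝ) (v : Fin N → ℝ) (i : Fin N) :
    ((((N:ℝ) • (1 : Matrix (Fin N) (Fin N) ℝ) - Matrix.of fun _ _ => (1:ℝ)) -
        α • Matrix.diagonal (fun i : Fin N => if (i:ℕ) = 0 then 0 else (N:ℝ))) *ᵥ v) i
      = (N:ℝ) * v i - (∑ j, v j) - α * (if (i:ℕ) = 0 then 0 else (N:ℝ)) * v i := by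
  simp [mulVec, dotProduct, Matrix.sub_apply, Matrix.smul_apply, one_apply, Matrix.diagonal,
    of_apply, sub_mul, mul_ite, ite_mul, Finset.sum_sub_distrib, mul_assoc,
    Finset.sum_ite_eq, Finset.sum_ite_eq']


/-- for the unit-weighted complete graph on `N ≥ 3` vertices, the minimal
eigenvalue of `K(α) = L - αΔ` is
`m(α) = -αN - (-N(α+1) + √((N(α+1)-2)² + 4(N-1)))/2` for all `α ∈ ℝ`. -/
theorem complete_graph_min_eigenvalue (N : ℕ) (hN : 3 ≤ N) (α : ℝ) :
    IsLeast {μ : ℝ | ∃ v : Fin N → ℝ, v ≠ 0 ∧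
        (((N : ℝ) • (1 : Matrix (Fin N) (Fin N) ℝ) - Matrix.of fun _ _ => (1 : ℝ)) -
            α • Matrix.diagonal (fun i : Fin N => if (i : ℕ) = 0 then 0 else (N : ℝ)))
          *ᵥ v = μ • v}
      (-α * N - (-(N : ℝ) * (α + 1) +
        Real.sqrt ((N * (α + 1) - 2) ^ 2 + 4 * (N - 1))) / 2) := by
  have hN0 : 0 < N := by omega
  set n : ℝ := (N:ℝ) with hn
  have hn3 : (3:ℝ) ≤ n := by rw [hn]; exact_mod_cast hN
  set T : ℝ := n - α * n with hT
  set D : ℝ := (n*(α+1)-2)^2 + 4*(n-1) with hD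
  have hD0 : 0 ≤ D := by rw [hD]; nlinarith [sq_nonneg (n*(α+1)-2)]
  set m : ℝ := -α * n - (-n * (α + 1) + Real.sqrt D) / 2 with hm
  clear_value m
  clear_value D
  clear_value T
  have hsq : Real.sqrt D ^ 2 = D := Real.sq_sqrt hD0
  have hsnn : 0 ≤ Real.sqrt D := Real.sqrt_nonneg D
  have hDT : D = T^2 + 4*(α*n*(n-1)) := by rw [hD, hT]; ring
  have hmT : m = (T - Real.sqrt D)/2 := by rw [hm, hT]; ring
  have hquad : m^2 - T*m - α*n*(n-1) = 0 := by
    rw [hmT]; nlinarith [hsq, hDT]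
  constructor
  · -- membership: explicit eigenvector
    refine ⟨fun i => if (i:ℕ) = 0 then n - 1 else n - 1 - m, ?_, ?_⟩
    · intro h
      have h0 := congrFun h (⟨0, hN0⟩ : Fin N)
      simp at h0
      nlinarith
    · funext i
      rw [mulVec_key, sum_if_fin N hN0]
      simp only [Pi.smul_apply, smul_eq_mul]
      by_cases h : (i:ℕ) = 0
      · simp only [h, if_true]
        ring
      · simp only [h, if_false]
        linear_combination hquad + m * hT
  · rintro μ ⟨v, hv, hEig⟩
    set s : ℝ := ∑ j, v j with hs
    clear_value s
    have key : ∀ i : Fin N, n * v i - s - (if (i:ℕ)=0 then 0 else α * n * v i) = μ * v i := by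
      intro i
      have h := congrFun hEig i
      rw [mulVec_key] at h
      rw [hs]
      simpa [mul_ite, mul_assoc] using h
    -- goal: m ≤ μ
    show m ≤ μ
    by_cases hcT : T - μ = 0
    · -- μ = T
      rw [hmT]
      have hTμ : μ = T := by linarith
      rcases le_or_gt 0 α with hα | hα
      · have h1 : T^2 ≤ D := by nlinarith [mul_nonneg (mul_nonneg hα (by linarith : (0:ℝ) ≤ n)) (by linarith : (0:ℝ) ≤ n-1)]
        have h2 : |T| ≤ Real.sqrt D := by
          rw [← Real.sqrt_sq_eq_abs]
          exact Real.sqrt_le_sqrt h1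
        have := neg_abs_le T
        linarith
      · have hTpos : 0 < T := by rw [hT]; nlinarith
        linarith
    · by_cases hcn : n - μ = 0
      · -- μ = n
        rw [hmT]
        have h1 : (n*(α+1)-2)^2 ≤ D := by nlinarith
        have h2 : |n*(α+1)-2| ≤ Real.sqrt D := by
          rw [← Real.sqrt_sq_eq_abs]
          exact Real.sqrt_le_sqrt h1
        have := neg_abs_le (n*(α+1)-2)
        have hμn : μ = n := by linarith
        rw [hμn, hT]
        nlinarith
      · -- generic case
        have hvall : ∀ i : Fin N, v i = if (i:ℕ) = 0 then s/(n-μ) else s/(T-μ) := by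
          intro i
          by_cases h : (i:ℕ) = 0
          · have hk := key i
            simp only [h, if_true] at hk ⊢
            rw [eq_div_iff hcn]
            linear_combination hk
          · have hk := key i
            simp only [h, if_false] at hk ⊢
            rw [eq_div_iff hcT, hT]
            linear_combination hk
        have hs0 : s ≠ 0 := by
          intro h0
          apply hv
          funext i
          rw [hvall i, h0]
          simp
        have hsum : s = s/(n-μ) + (n-1) * (s/(T-μ)) := by
          conv_lhs => rw [hs, Finset.sum_congr rfl (fun j _ => hvall j)]
          rw [sum_if_fin N hN0]
        have hpoly : s * (μ^2 - T*μ - α*n*(n-1)) = 0 := by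
          field_simp at hsum
          linear_combination s*hsum + s*(1-n)*hT
        have hq : μ^2 - T*μ - α*n*(n-1) = 0 := by
          rcases mul_eq_zero.mp hpoly with h | h
          · exact absurd h hs0
          · exact h
        have hsq2 : Real.sqrt D = |2*μ - T| := by
          rw [← Real.sqrt_sq_eq_abs]
          congr 1
          linear_combination hDT - 4*hq
        have habs := neg_abs_le (2*μ - T)
        rw [hmT]
        rw [hsq2]
        linarith
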